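/- (Hoeffding-type concentration in Hilbert space.) Let H be a separable real Hilbert space, (Ω, F, P) a probability space, n ≥ 1, and ξ₁, ..., ξₙ : Ω → H independent identically distributed Bochner-integrable random vectors with ‖ξᵢ‖ ≤ M almost surely for some M > 0. Then for every ε > 0, P( ‖(1/n)Σᵢ ξᵢ − E[ξ₁]‖ ≥ ε ) ≤ 2·exp( −n ε² / (8M²) ). -/

import Mathlib

open MeasureTheory ProbabilityTheory Real

/-! ### Elementary real inequalities -/

private lemma pow_pair_le {A x y : ℝ} (hxy : |x| ≤ y) (hyA : y ≤ A) (k : ℕ) :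
    (A + x) ^ k + (A - x) ^ k ≤ (A + y) ^ k + (A - y) ^ k := by
  have hy : (0:ℝ) ≤ y := (abs_nonneg x).trans hxy
  have hA : (0:ℝ) ≤ A := hy.trans hyA
  rw [sub_eq_add_neg, sub_eq_add_neg, add_pow, add_pow, add_pow, add_pow,
    ← Finset.sum_add_distrib, ← Finset.sum_add_distrib]
  refine Finset.sum_le_sum fun j hj => ?_
  have h1 : A ^ j * x ^ (k - j) * (k.choose j : ℝ) + A ^ j * (-x) ^ (k - j) * (k.choose j : ℝ)
      = A ^ j * (x ^ (k - j) + (-x) ^ (k - j)) * (k.choose j : ℝ) := by ring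
  have h2 : A ^ j * y ^ (k - j) * (k.choose j : ℝ) + A ^ j * (-y) ^ (k - j) * (k.choose j : ℝ)
      = A ^ j * (y ^ (k - j) + (-y) ^ (k - j)) * (k.choose j : ℝ) := by ring
  rw [h1, h2]
  have key : x ^ (k - j) + (-x) ^ (k - j) ≤ y ^ (k - j) + (-y) ^ (k - j) := by
    rcases Nat.even_or_odd (k - j) with he | ho
    · rw [he.neg_pow, he.neg_pow]
      have : x ^ (k - j) ≤ y ^ (k - j) := by
        calc x ^ (k - j) ≤ |x ^ (k - j)| := le_abs_self _
        _ = |x| ^ (k - j) := by rw [abs_pow]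
        _ ≤ y ^ (k - j) := pow_le_pow_left₀ (abs_nonneg x) hxy _
      linarith
    · rw [ho.neg_pow, ho.neg_pow]; simp
  exact mul_le_mul_of_nonneg_right (mul_le_mul_of_nonneg_left key (pow_nonneg hA _))
    (Nat.cast_nonneg _)

private lemma half_exp_le_cosh (x : ℝ) : Real.exp x / 2 ≤ Real.cosh x := by
  rw [Real.cosh_eq]
  have := (Real.exp_pos (-x)).le
  linarith

private lemma convexOn_cosh : ConvexOn ℝ Set.univ Real.cosh := by
  have h2 : ConvexOn ℝ Set.univ (fun x : ℝ => Real.exp (-x)) := by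
    have := convexOn_exp.comp_linearMap (-LinearMap.id (R := ℝ) (M := ℝ))
    simpa [Function.comp_def] using this
  have h3 := (convexOn_exp.add h2).smul (c := (1/2:ℝ)) (by norm_num)
  have : Real.cosh = fun x : ℝ => (1/2 : ℝ) • (Real.exp x + Real.exp (-x)) := by
    funext x; rw [Real.cosh_eq, smul_eq_mul]; ring
  rw [this]
  simpa using h3

section Hilbert

variable {H : Type*} [NormedAddCommGroup H] [InnerProductSpace ℝ H]

/-- Pointwise parallelogram-type bound in Hilbert space. -/
private lemma cosh_norm_add_add_cosh_norm_sub (s d : H) :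
    Real.cosh ‖s + d‖ + Real.cosh ‖s - d‖ ≤ 2 * Real.cosh ‖s‖ * Real.cosh ‖d‖ := by
  set A : ℝ := ‖s‖ ^ 2 + ‖d‖ ^ 2 with hA
  set x : ℝ := 2 * inner ℝ s d with hx
  set y : ℝ := 2 * (‖s‖ * ‖d‖) with hy
  have hadd : ‖s + d‖ ^ 2 = A + x := by rw [norm_add_sq_real]; ring
  have hsub : ‖s - d‖ ^ 2 = A - x := by rw [norm_sub_sq_real]; ring
  have hadd' : (‖s‖ + ‖d‖) ^ 2 = A + y := by ring
  have hsub' : (‖s‖ - ‖d‖) ^ 2 = A - y := by ring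
  have hxy : |x| ≤ y := by
    rw [hx, hy, abs_mul, abs_two]
    exact mul_le_mul_of_nonneg_left (abs_real_inner_le_norm s d) (by norm_num)
  have hyA : y ≤ A := by rw [hy, hA]; nlinarith [sq_nonneg (‖s‖ - ‖d‖)]
  have key : ∀ k : ℕ,
      ‖s + d‖ ^ (2 * k) / ((2 * k).factorial : ℝ) + ‖s - d‖ ^ (2 * k) / ((2 * k).factorial : ℝ)
      ≤ (‖s‖ + ‖d‖) ^ (2 * k) / ((2 * k).factorial : ℝ)
        + (‖s‖ - ‖d‖) ^ (2 * k) / ((2 * k).factorial : ℝ) := by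
    intro k
    rw [← add_div, ← add_div]
    apply div_le_div_of_nonneg_right _ (by positivity)
    rw [pow_mul, pow_mul, pow_mul, pow_mul, hadd, hsub, hadd', hsub']
    exact pow_pair_le hxy hyA k
  have h1 := (Real.hasSum_cosh ‖s + d‖).add (Real.hasSum_cosh ‖s - d‖)
  have h2 := (Real.hasSum_cosh (‖s‖ + ‖d‖)).add (Real.hasSum_cosh (‖s‖ - ‖d‖))
  have := hasSum_le (f := fun k : ℕ =>
      ‖s + d‖ ^ (2 * k) / ((2 * k).factorial : ℝ) + ‖s - d‖ ^ (2 * k) / ((2 * k).factorial : ℝ))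
    (g := fun k : ℕ => (‖s‖ + ‖d‖) ^ (2 * k) / ((2 * k).factorial : ℝ)
      + (‖s‖ - ‖d‖) ^ (2 * k) / ((2 * k).factorial : ℝ)) key h1 h2
  calc Real.cosh ‖s + d‖ + Real.cosh ‖s - d‖
      ≤ Real.cosh (‖s‖ + ‖d‖) + Real.cosh (‖s‖ - ‖d‖) := this
    _ = 2 * Real.cosh ‖s‖ * Real.cosh ‖d‖ := by rw [Real.cosh_add, Real.cosh_sub]; ring

private lemma convexOn_cosh_norm_sub (c : H) :
    ConvexOn ℝ Set.univ fun v : H => Real.cosh ‖c - v‖ := by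
  refine ⟨convex_univ, fun u _ v _ a b ha hb hab => ?_⟩
  have hmix : c - (a • u + b • v) = a • (c - u) + b • (c - v) := by
    have hc : a • c + b • c = c := by rw [← add_smul, hab, one_smul]
    calc c - (a • u + b • v) = (a • c + b • c) - (a • u + b • v) := by rw [hc]
    _ = a • (c - u) + b • (c - v) := by rw [smul_sub, smul_sub]; abel
  have hn : ‖c - (a • u + b • v)‖ ≤ a * ‖c - u‖ + b * ‖c - v‖ := by
    rw [hmix]
    refine (norm_add_le _ _).trans ?_
    rw [norm_smul, norm_smul, Real.norm_eq_abs, Real.norm_eq_abs, abs_of_nonneg ha,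
      abs_of_nonneg hb]
  have h1 : Real.cosh ‖c - (a • u + b • v)‖ ≤ Real.cosh (a * ‖c - u‖ + b * ‖c - v‖) := by
    apply Real.cosh_le_cosh.2
    rw [abs_of_nonneg (norm_nonneg _), abs_of_nonneg (by positivity)]
    exact hn
  refine h1.trans ?_
  have := convexOn_cosh.2 (Set.mem_univ (‖c - u‖)) (Set.mem_univ (‖c - v‖)) ha hb hab
  simpa [smul_eq_mul] using this

end Hilbert

/-! ### Measure-theoretic helpers -/

private lemma ae_prod_mk {α β : Type*} [MeasurableSpace α] [MeasurableSpace β]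
    {κ₁ : Measure α} {κ₂ : Measure β} [SFinite κ₁] [SFinite κ₂]
    {P : α → Prop} {Q : β → Prop} (hPm : MeasurableSet {a | P a})
    (hQm : MeasurableSet {b | Q b}) (h1 : ∀ᵐ a ∂κ₁, P a) (h2 : ∀ᵐ b ∂κ₂, Q b) :
    ∀ᵐ q ∂κ₁.prod κ₂, P q.1 ∧ Q q.2 := by
  rw [ae_iff] at h1 h2 ⊢
  refine measure_mono_null
    (t := ({a | ¬ P a} ×ˢ (Set.univ : Set β)) ∪ ((Set.univ : Set α) ×ˢ {b | ¬ Q b}))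
    (fun q hq => ?_) (measure_union_null ?_ ?_)
  · simp only [Set.mem_setOf_eq, not_and_or] at hq
    rcases hq with h | h
    · exact Or.inl ⟨h, Set.mem_univ _⟩
    · exact Or.inr ⟨Set.mem_univ _, h⟩
  · rw [Measure.prod_prod, h1, zero_mul]
  · rw [Measure.prod_prod, h2, mul_zero]

section Shuffle
variable {α : Type*} [MeasurableSpace α]

private def shuffle : (α × α) × (α × α) → (α × α) × (α × α) :=
  fun q => ((q.1.1, q.2.1), (q.1.2, q.2.2))

private lemma measurable_shuffle : Measurable (shuffle (α := α)) :=
  ((measurable_fst.comp measurable_fst).prodMk (measurable_fst.comp measurable_snd)).prodMk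
    ((measurable_snd.comp measurable_fst).prodMk (measurable_snd.comp measurable_snd))

private lemma measurePreserving_shuffle (κ1 κ2 κ3 κ4 : Measure α) [IsProbabilityMeasure κ1]
    [IsProbabilityMeasure κ2] [IsProbabilityMeasure κ3] [IsProbabilityMeasure κ4] :
    MeasurePreserving shuffle ((κ1.prod κ2).prod (κ3.prod κ4))
      ((κ1.prod κ3).prod (κ2.prod κ4)) := by
  have h1 : MeasurePreserving (⇑(MeasurableEquiv.prodAssoc (α := α) (β := α) (γ := α × α)))
      ((κ1.prod κ2).prod (κ3.prod κ4)) (κ1.prod (κ2.prod (κ3.prod κ4))) :=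
    ⟨MeasurableEquiv.prodAssoc.measurable, Measure.prodAssoc_prod⟩
  have ha2 : MeasurePreserving (⇑(MeasurableEquiv.prodAssoc (α := α) (β := α) (γ := α)).symm)
      (κ2.prod (κ3.prod κ4)) ((κ2.prod κ3).prod κ4) :=
    MeasurePreserving.symm _ ⟨MeasurableEquiv.prodAssoc.measurable, Measure.prodAssoc_prod⟩
  have hmid0 : MeasurePreserving (Prod.map (Prod.swap : α × α → α × α) (id : α → α))
      ((κ2.prod κ3).prod κ4) ((κ3.prod κ2).prod κ4) :=
    (Measure.measurePreserving_swap).prod (MeasurePreserving.id κ4)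
  have ha3 : MeasurePreserving (⇑(MeasurableEquiv.prodAssoc (α := α) (β := α) (γ := α)))
      ((κ3.prod κ2).prod κ4) (κ3.prod (κ2.prod κ4)) :=
    ⟨MeasurableEquiv.prodAssoc.measurable, Measure.prodAssoc_prod⟩
  have hmid := ha3.comp (hmid0.comp ha2)
  have h2 := (MeasurePreserving.id κ1).prod hmid
  have h3 : MeasurePreserving (⇑(MeasurableEquiv.prodAssoc (α := α) (β := α) (γ := α × α)).symm)
      (κ1.prod ((κ3.prod (κ2.prod κ4))))
      ((κ1.prod κ3).prod (κ2.prod κ4)) :=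
    MeasurePreserving.symm _ ⟨MeasurableEquiv.prodAssoc.measurable, Measure.prodAssoc_prod⟩
  exact h3.comp (h2.comp h1)
end Shuffle

section IndepProd
variable {α : Type*} [MeasurableSpace α] {Ω Ω' : Type*} [MeasurableSpace Ω] [MeasurableSpace Ω']

private lemma indepFun_prod_space (μ : Measure Ω) (μ' : Measure Ω') [IsProbabilityMeasure μ]
    [IsProbabilityMeasure μ'] {X Y : Ω → α} {X' Y' : Ω' → α} (hX : Measurable X)
    (hY : Measurable Y) (hX' : Measurable X') (hY' : Measurable Y')
    (h : IndepFun X Y μ) (h' : IndepFun X' Y' μ') :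
    IndepFun (fun p : Ω × Ω' => (X p.1, X' p.2)) (fun p : Ω × Ω' => (Y p.1, Y' p.2))
      (μ.prod μ') := by
  have hXf : Measurable fun p : Ω × Ω' => (X p.1, X' p.2) :=
    (hX.comp measurable_fst).prodMk (hX'.comp measurable_snd)
  have hYf : Measurable fun p : Ω × Ω' => (Y p.1, Y' p.2) :=
    (hY.comp measurable_fst).prodMk (hY'.comp measurable_snd)
  haveI : IsProbabilityMeasure (μ.map X) := Measure.isProbabilityMeasure_map hX.aemeasurable
  haveI : IsProbabilityMeasure (μ.map Y) := Measure.isProbabilityMeasure_map hY.aemeasurable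
  haveI : IsProbabilityMeasure (μ'.map X') := Measure.isProbabilityMeasure_map hX'.aemeasurable
  haveI : IsProbabilityMeasure (μ'.map Y') := Measure.isProbabilityMeasure_map hY'.aemeasurable
  rw [indepFun_iff_map_prod_eq_prod_map_map hXf.aemeasurable hYf.aemeasurable]
  have hF : Measurable fun ω : Ω => (X ω, Y ω) := hX.prodMk hY
  have hG : Measurable fun ω : Ω' => (X' ω, Y' ω) := hX'.prodMk hY'
  have hstep1 : (μ.prod μ').map (fun p : Ω × Ω' => ((X p.1, Y p.1), (X' p.2, Y' p.2)))
      = ((μ.map X).prod (μ.map Y)).prod ((μ'.map X').prod (μ'.map Y')) := by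
    have h0 := Measure.map_prod_map (f := fun ω : Ω => (X ω, Y ω))
      (g := fun ω : Ω' => (X' ω, Y' ω)) μ μ' hF hG
    rw [(indepFun_iff_map_prod_eq_prod_map_map hX.aemeasurable hY.aemeasurable).mp h,
      (indepFun_iff_map_prod_eq_prod_map_map hX'.aemeasurable hY'.aemeasurable).mp h'] at h0
    have h1 : (μ.prod μ').map (fun p : Ω × Ω' => ((X p.1, Y p.1), (X' p.2, Y' p.2)))
        = (μ.prod μ').map (Prod.map (fun ω : Ω => (X ω, Y ω)) (fun ω : Ω' => (X' ω, Y' ω))) := rfl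
    rw [h1, ← h0]
  have hcomp : (fun p : Ω × Ω' => ((X p.1, X' p.2), (Y p.1, Y' p.2)))
      = shuffle ∘ (fun p : Ω × Ω' => ((X p.1, Y p.1), (X' p.2, Y' p.2))) := rfl
  have hpair : Measurable fun p : Ω × Ω' => ((X p.1, Y p.1), (X' p.2, Y' p.2)) :=
    ((hX.comp measurable_fst).prodMk (hY.comp measurable_fst)).prodMk
      ((hX'.comp measurable_snd).prodMk (hY'.comp measurable_snd))
  rw [hcomp, ← Measure.map_map measurable_shuffle hpair]
  · rw [hstep1, (measurePreserving_shuffle _ _ _ _).map_eq]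
    have e1 : (μ.prod μ').map (fun p : Ω × Ω' => (X p.1, X' p.2))
        = (μ.map X).prod (μ'.map X') := by
      rw [Measure.map_prod_map _ _ hX hX']; rfl
    have e2 : (μ.prod μ').map (fun p : Ω × Ω' => (Y p.1, Y' p.2))
        = (μ.map Y).prod (μ'.map Y') := by
      rw [Measure.map_prod_map _ _ hY hY']; rfl
    rw [e1, e2]
end IndepProd

section StepLemma

variable {H : Type*} [NormedAddCommGroup H] [InnerProductSpace ℝ H]
  [MeasurableSpace H] [BorelSpace H]

private lemma cosh_norm_meas (s : H) : Measurable fun d : H => Real.cosh ‖s + d‖ :=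
  (Real.continuous_cosh.comp ((continuous_const.add continuous_id).norm)).measurable

private lemma step_integral (ν : Measure H) [IsProbabilityMeasure ν]
    (hsym : ν.map (fun x : H => -x) = ν) {b : ℝ} (hb : ∀ᵐ d ∂ν, ‖d‖ ≤ b) (s : H) :
    ∫ d, Real.cosh ‖s + d‖ ∂ν ≤ Real.cosh ‖s‖ * Real.cosh b := by
  have hb0 : 0 ≤ b := by
    obtain ⟨d, hd⟩ := hb.exists
    exact (norm_nonneg d).trans hd
  have meas1 : Measurable fun d : H => Real.cosh ‖s + d‖ := cosh_norm_meas s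
  have meas2 : Measurable fun d : H => Real.cosh ‖s - d‖ := by
    simpa [sub_eq_add_neg, Function.comp_def] using
      (cosh_norm_meas s).comp (measurable_neg : Measurable fun d : H => -d)
  have hcosh_bound : ∀ᵐ d ∂ν, ‖Real.cosh ‖s + d‖‖ ≤ Real.cosh (‖s‖ + b) := by
    filter_upwards [hb] with d hd
    rw [Real.norm_eq_abs, abs_of_pos (Real.cosh_pos _)]
    apply Real.cosh_le_cosh.2
    rw [abs_of_nonneg (norm_nonneg _), abs_of_nonneg (by positivity)]
    exact (norm_add_le _ _).trans (by linarith)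
  have hcosh_bound2 : ∀ᵐ d ∂ν, ‖Real.cosh ‖s - d‖‖ ≤ Real.cosh (‖s‖ + b) := by
    filter_upwards [hb] with d hd
    rw [Real.norm_eq_abs, abs_of_pos (Real.cosh_pos _)]
    apply Real.cosh_le_cosh.2
    rw [abs_of_nonneg (norm_nonneg _), abs_of_nonneg (by positivity)]
    exact (norm_sub_le _ _).trans (by linarith)
  have int1 : Integrable (fun d => Real.cosh ‖s + d‖) ν :=
    (integrable_const _).mono' meas1.aestronglyMeasurable hcosh_bound
  have int2 : Integrable (fun d => Real.cosh ‖s - d‖) ν :=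
    (integrable_const _).mono' meas2.aestronglyMeasurable hcosh_bound2
  have heq : ∫ d, Real.cosh ‖s + d‖ ∂ν = ∫ d, Real.cosh ‖s - d‖ ∂ν := by
    conv_lhs => rw [← hsym]
    rw [integral_map measurable_neg.aemeasurable]
    · simp only [sub_eq_add_neg]
    · rw [hsym]; exact meas1.aestronglyMeasurable
  have hmono : ∫ d, (Real.cosh ‖s + d‖ + Real.cosh ‖s - d‖) ∂ν
      ≤ ∫ _d, 2 * Real.cosh ‖s‖ * Real.cosh b ∂ν := by
    refine integral_mono_ae (int1.add int2) (integrable_const _) ?_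
    filter_upwards [hb] with d hd
    refine (cosh_norm_add_add_cosh_norm_sub s d).trans ?_
    have h1 : Real.cosh ‖d‖ ≤ Real.cosh b := by
      apply Real.cosh_le_cosh.2
      rwa [abs_of_nonneg (norm_nonneg _), abs_of_nonneg hb0]
    exact mul_le_mul_of_nonneg_left h1 (by positivity)
  rw [integral_add int1 int2, ← heq, integral_const] at hmono
  simp only [measure_univ, ENNReal.toReal_one, probReal_univ, smul_eq_mul, one_mul] at hmono
  linarith

end StepLemma

section Core
variable {H : Type*} [NormedAddCommGroup H] [InnerProductSpace ℝ H]
  [SecondCountableTopology H] [MeasurableSpace H] [BorelSpace H] {Ω : Type*} [MeasurableSpace Ω]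

private lemma core_induction (μ : Measure Ω) [IsProbabilityMeasure μ] {n : ℕ}
    (X : Fin n → Ω → H) (hXmeas : ∀ i, Measurable (X i))
    (hXindep : iIndepFun X μ) {b : ℝ}
    (hb' : ∀ᵐ ω ∂μ, ∀ i, ‖X i ω‖ ≤ b) (s : Finset (Fin n)) :
    ∫ p, Real.cosh ‖∑ i ∈ s, (X i p.1 - X i p.2)‖ ∂(μ.prod μ)
      ≤ Real.cosh (2 * b) ^ s.card := by
  induction s using Finset.cons_induction with
  | empty => simp
  | cons k t hk ih =>
    -- notation
    set μ2 := μ.prod μ with hμ2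
    have hSmeas : Measurable (∑ i ∈ t, X i) := by
      have h0 : (∑ i ∈ t, X i) = fun ω => ∑ i ∈ t, X i ω := by
        funext ω; exact Finset.sum_apply ω t X
      rw [h0]
      exact Finset.measurable_sum t fun i _ => hXmeas i
    set A : Ω × Ω → H := fun p => ∑ i ∈ t, (X i p.1 - X i p.2) with hA
    set B : Ω × Ω → H := fun p => X k p.1 - X k p.2 with hB
    have hAmeas : Measurable A := by
      apply Finset.measurable_sum
      exact fun i _ => ((hXmeas i).comp measurable_fst).sub ((hXmeas i).comp measurable_snd)
    have hBmeas : Measurable B :=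
      ((hXmeas k).comp measurable_fst).sub ((hXmeas k).comp measurable_snd)
    -- independence of A and B
    have hS : IndepFun (∑ i ∈ t, X i) (X k) μ :=
      hXindep.indepFun_finsetSum_of_notMem hXmeas hk
    have hsub : Measurable fun q : H × H => q.1 - q.2 := measurable_fst.sub measurable_snd
    have hAB : IndepFun A B μ2 := by
      have hpair := indepFun_prod_space μ μ hSmeas (hXmeas k) hSmeas (hXmeas k) hS hS
      have := hpair.comp hsub hsub
      have hAeq : (fun q : H × H => q.1 - q.2) ∘
          (fun p : Ω × Ω => ((∑ i ∈ t, X i) p.1, (∑ i ∈ t, X i) p.2)) = A := by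
        funext p
        simp only [Function.comp_apply, hA, Finset.sum_apply, Finset.sum_sub_distrib]
      have hBeq : (fun q : H × H => q.1 - q.2) ∘
          (fun p : Ω × Ω => (X k p.1, X k p.2)) = B := rfl
      rwa [hAeq, hBeq] at this
    -- laws
    set κA := μ2.map A with hκA
    set κB := μ2.map B with hκB
    haveI : IsProbabilityMeasure κA := Measure.isProbabilityMeasure_map hAmeas.aemeasurable
    haveI : IsProbabilityMeasure κB := Measure.isProbabilityMeasure_map hBmeas.aemeasurable
    -- symmetry of κB
    have hsymB : κB.map (fun x : H => -x) = κB := by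
      rw [hκB, Measure.map_map measurable_neg hBmeas]
      have hBneg : (fun x : H => -x) ∘ B = B ∘ Prod.swap := by
        funext p; simp [hB, neg_sub]
      rw [hBneg, ← Measure.map_map hBmeas measurable_swap, Measure.prod_swap]
    -- a.e. bounds
    have hbb : ∀ᵐ p ∂μ2, (∀ i, ‖X i p.1‖ ≤ b) ∧ (∀ i, ‖X i p.2‖ ≤ b) := by
      have hmset : MeasurableSet {ω : Ω | ∀ i, ‖X i ω‖ ≤ b} := by
        rw [Set.setOf_forall]
        exact MeasurableSet.iInter fun i => measurableSet_le (hXmeas i).norm measurable_const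
      exact ae_prod_mk hmset hmset hb' hb'
    have hABound : ∀ᵐ p ∂μ2, ‖A p‖ ≤ 2 * b * t.card := by
      filter_upwards [hbb] with p hp
      calc ‖A p‖ ≤ ∑ i ∈ t, ‖X i p.1 - X i p.2‖ := norm_sum_le _ _
        _ ≤ ∑ _i ∈ t, (2 * b) := by
            refine Finset.sum_le_sum fun i _ => ?_
            have := norm_sub_le (X i p.1) (X i p.2)
            have h1 := hp.1 i; have h2 := hp.2 i
            linarith
        _ = 2 * b * t.card := by rw [Finset.sum_const, nsmul_eq_mul]; ring
    have hBBound : ∀ᵐ p ∂μ2, ‖B p‖ ≤ 2 * b := by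
      filter_upwards [hbb] with p hp
      have := norm_sub_le (X k p.1) (X k p.2)
      have h1 := hp.1 k; have h2 := hp.2 k
      linarith
    have hκABound : ∀ᵐ a ∂κA, ‖a‖ ≤ 2 * b * t.card :=
      (ae_map_iff hAmeas.aemeasurable (measurableSet_le measurable_norm measurable_const)).2
        hABound
    have hκBBound : ∀ᵐ d ∂κB, ‖d‖ ≤ 2 * b :=
      (ae_map_iff hBmeas.aemeasurable (measurableSet_le measurable_norm measurable_const)).2
        hBBound
    have hb0 : 0 ≤ b := by
      obtain ⟨ω, hω⟩ := hb'.exists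
      exact (norm_nonneg _).trans (hω k)
    -- the joint law is the product law
    have hjoint : μ2.map (fun p => (A p, B p)) = κA.prod κB :=
      (indepFun_iff_map_prod_eq_prod_map_map hAmeas.aemeasurable hBmeas.aemeasurable).mp hAB
    -- continuity/measurability of the integrand
    have hcont : Continuous fun q : H × H => Real.cosh ‖q.1 + q.2‖ :=
      Real.continuous_cosh.comp (continuous_fst.add continuous_snd).norm
    -- integrability on the product of laws
    have hintprod : Integrable (fun q : H × H => Real.cosh ‖q.1 + q.2‖) (κA.prod κB) := by
      refine (integrable_const (Real.cosh (2 * b * t.card + 2 * b))).mono'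
        hcont.measurable.aestronglyMeasurable ?_
      filter_upwards [ae_prod_mk (P := fun a : H => ‖a‖ ≤ 2 * b * t.card)
        (Q := fun d : H => ‖d‖ ≤ 2 * b)
        (measurableSet_le measurable_norm measurable_const)
        (measurableSet_le measurable_norm measurable_const) hκABound hκBBound] with q hq
      rw [Real.norm_eq_abs, abs_of_pos (Real.cosh_pos _)]
      apply Real.cosh_le_cosh.2
      rw [abs_of_nonneg (norm_nonneg _), abs_of_nonneg (by positivity)]
      exact (norm_add_le _ _).trans (by linarith [hq.1, hq.2])
    -- rewrite the goal integral
    have hgoal_eq : ∫ p, Real.cosh ‖∑ i ∈ Finset.cons k t hk, (X i p.1 - X i p.2)‖ ∂μ2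
        = ∫ q : H × H, Real.cosh ‖q.1 + q.2‖ ∂(κA.prod κB) := by
      rw [← hjoint, integral_map (hAmeas.prodMk hBmeas).aemeasurable
        hcont.aestronglyMeasurable]
      congr 1
      funext p
      rw [Finset.sum_cons]
      congr 1
      rw [add_comm]
    have hcontA : Continuous fun a : H => Real.cosh ‖a‖ :=
      Real.continuous_cosh.comp continuous_norm
    have intA : Integrable (fun a : H => Real.cosh ‖a‖) κA := by
      refine (integrable_const (Real.cosh (2 * b * t.card))).mono'
        hcontA.aestronglyMeasurable ?_
      filter_upwards [hκABound] with a ha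
      rw [Real.norm_eq_abs, abs_of_pos (Real.cosh_pos _)]
      apply Real.cosh_le_cosh.2
      rwa [abs_of_nonneg (norm_nonneg _), abs_of_nonneg (by positivity)]
    calc ∫ p, Real.cosh ‖∑ i ∈ Finset.cons k t hk, (X i p.1 - X i p.2)‖ ∂μ2
        = ∫ q : H × H, Real.cosh ‖q.1 + q.2‖ ∂(κA.prod κB) := hgoal_eq
      _ = ∫ a, ∫ d, Real.cosh ‖a + d‖ ∂κB ∂κA := integral_prod _ hintprod
      _ ≤ ∫ a, Real.cosh ‖a‖ * Real.cosh (2 * b) ∂κA := by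
          refine integral_mono hintprod.integral_prod_left
            (intA.mul_const _) fun a => ?_
          exact step_integral κB hsymB hκBBound a
      _ = (∫ a, Real.cosh ‖a‖ ∂κA) * Real.cosh (2 * b) := integral_mul_const _ _
      _ = (∫ p, Real.cosh ‖A p‖ ∂μ2) * Real.cosh (2 * b) := by
          rw [hκA, integral_map hAmeas.aemeasurable hcontA.aestronglyMeasurable]
      _ ≤ Real.cosh (2 * b) ^ t.card * Real.cosh (2 * b) := by
          exact mul_le_mul_of_nonneg_right ih (Real.cosh_pos _).le
      _ = Real.cosh (2 * b) ^ (Finset.cons k t hk).card := by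
          rw [Finset.card_cons, pow_succ]
end Core

/-- Hoeffding-type concentration for i.i.d. bounded random vectors in a
separable real Hilbert space:
`P(‖(1/n)Σᵢ ξᵢ − E[ξ₁]‖ ≥ ε) ≤ 2 exp(−nε²/(8M²))`. -/
theorem hilbert_hoeffding {H : Type*} [NormedAddCommGroup H]
    [InnerProductSpace ℝ H] [CompleteSpace H] [SecondCountableTopology H]
    [MeasurableSpace H] [BorelSpace H] {Ω : Type*} [MeasurableSpace Ω]
    (μ : Measure Ω) [IsProbabilityMeasure μ] (n : ℕ) (hn : 0 < n)
    (ξ : Fin n → Ω → H) (hmeas : ∀ i, Measurable (ξ i))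
    (hindep : iIndepFun ξ μ)
    (hident : ∀ i j, IdentDistrib (ξ i) (ξ j) μ μ)
    (hint : ∀ i, Integrable (ξ i) μ) (M : ℝ) (hM : 0 < M)
    (hbound : ∀ i, ∀ᵐ ω ∂μ, ‖ξ i ω‖ ≤ M) (ε : ℝ) (hε : 0 < ε) :
    μ {ω | ε ≤ ‖(n : ℝ)⁻¹ • ∑ i, ξ i ω - ∫ ω', ξ ⟨0, hn⟩ ω' ∂μ‖} ≤
      ENNReal.ofReal (2 * Real.exp (-(n : ℝ) * ε ^ 2 / (8 * M ^ 2))) := by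
  have hM2 : (0:ℝ) < M ^ 2 := by positivity
  set lam : ℝ := ε / (4 * M ^ 2) with hlam
  have hlam_pos : 0 < lam := by positivity
  set X : Fin n → Ω → H := fun i ω => lam • ξ i ω with hXdef
  have hXmeas : ∀ i, Measurable (X i) := fun i => (hmeas i).const_smul lam
  have hXindep : iIndepFun X μ :=
    hindep.comp (fun _ (x : H) => lam • x) (fun _ => measurable_id.const_smul lam)
  have hXbound : ∀ᵐ ω ∂μ, ∀ i, ‖X i ω‖ ≤ lam * M := by
    rw [ae_all_iff]
    intro i
    filter_upwards [hbound i] with ω h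
    rw [hXdef]
    simp only [norm_smul, Real.norm_eq_abs, abs_of_pos hlam_pos]
    exact mul_le_mul_of_nonneg_left h hlam_pos.le
  set m0 : H := ∫ ω, ξ ⟨0, hn⟩ ω ∂μ with hm0
  set S : Ω → H := fun ω => ∑ i, X i ω with hSdef
  have hSmeas : Measurable S := Finset.measurable_sum _ fun i _ => hXmeas i
  have hXint : ∀ i, Integrable (X i) μ := fun i => (hint i).smul lam
  have hSint : Integrable S μ := integrable_finset_sum _ fun i _ => hXint i
  set c : H := ∫ ω, S ω ∂μ with hcdef
  have hc : c = (n : ℝ) • (lam • m0) := by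
    rw [hcdef, hSdef, integral_finset_sum _ fun i _ => hXint i]
    have h1 : ∀ i : Fin n, ∫ ω, X i ω ∂μ = lam • m0 := by
      intro i
      rw [hXdef, hm0]
      simp only
      rw [integral_smul, (hident i ⟨0, hn⟩).integral_eq]
    rw [Finset.sum_congr rfl fun i _ => h1 i, Finset.sum_const, Finset.card_univ,
      Fintype.card_fin, ← Nat.cast_smul_eq_nsmul ℝ]
  -- bounds on S and c
  have hSbound : ∀ᵐ ω ∂μ, ‖S ω‖ ≤ n * (lam * M) := by
    filter_upwards [hXbound] with ω h
    calc ‖S ω‖ ≤ ∑ i, ‖X i ω‖ := norm_sum_le _ _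
      _ ≤ ∑ _i : Fin n, (lam * M) := Finset.sum_le_sum fun i _ => h i
      _ = n * (lam * M) := by rw [Finset.sum_const, Finset.card_univ, Fintype.card_fin,
            nsmul_eq_mul]
  have hm0bound : ‖m0‖ ≤ M := by
    rw [hm0]
    have := norm_integral_le_of_norm_le (integrable_const M) (hbound ⟨0, hn⟩)
    simpa using this
  have hcbound : ‖c‖ ≤ n * (lam * M) := by
    rw [hc]
    simp only [norm_smul, Real.norm_eq_abs, abs_of_pos hlam_pos,
      abs_of_nonneg (Nat.cast_nonneg (α := ℝ) n)]
    have : lam * ‖m0‖ ≤ lam * M := mul_le_mul_of_nonneg_left hm0bound hlam_pos.le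
    exact mul_le_mul_of_nonneg_left this (Nat.cast_nonneg n)
  set Y : Ω → ℝ := fun ω => Real.cosh ‖S ω - c‖ with hYdef
  have hYmeas : Measurable Y :=
    Real.continuous_cosh.measurable.comp (hSmeas.sub measurable_const).norm
  have hYint : Integrable Y μ := by
    refine (integrable_const (Real.cosh (2 * (n * (lam * M))))).mono'
      hYmeas.aestronglyMeasurable ?_
    filter_upwards [hSbound] with ω h
    rw [Real.norm_eq_abs, abs_of_pos (Real.cosh_pos _)]
    apply Real.cosh_le_cosh.2
    rw [abs_of_nonneg (norm_nonneg _), abs_of_nonneg (by positivity)]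
    exact (norm_sub_le _ _).trans (by linarith [hcbound])
  -- event inclusion
  have hn' : (0:ℝ) < n := Nat.cast_pos.2 hn
  have hsubset : {ω | ε ≤ ‖(n : ℝ)⁻¹ • ∑ i, ξ i ω - m0‖}
      ⊆ {ω | Real.cosh (lam * (n * ε)) ≤ Y ω} := by
    intro ω hω
    simp only [Set.mem_setOf_eq] at hω ⊢
    have key1 : S ω - c = lam • (∑ i, ξ i ω - (n:ℝ) • m0) := by
      rw [hc]
      have h1 : S ω = lam • (∑ i, ξ i ω) := by
        rw [hSdef, Finset.smul_sum]
      rw [h1, smul_sub, smul_comm lam ((n:ℝ)) m0]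
    have key2 : (∑ i, ξ i ω - (n:ℝ) • m0) = (n:ℝ) • ((n:ℝ)⁻¹ • ∑ i, ξ i ω - m0) := by
      rw [smul_sub, smul_smul, mul_inv_cancel₀ hn'.ne', one_smul]
    have hnorm : ‖S ω - c‖ = lam * ((n:ℝ) * ‖(n:ℝ)⁻¹ • ∑ i, ξ i ω - m0‖) := by
      rw [key1, key2, norm_smul, norm_smul, Real.norm_eq_abs, Real.norm_eq_abs,
        abs_of_pos hlam_pos, abs_of_pos hn']
    rw [hYdef]
    apply Real.cosh_le_cosh.2
    rw [abs_of_nonneg (by positivity), abs_of_nonneg (norm_nonneg _), hnorm]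
    have : (n:ℝ) * ε ≤ (n:ℝ) * ‖(n:ℝ)⁻¹ • ∑ i, ξ i ω - m0‖ :=
      mul_le_mul_of_nonneg_left hω hn'.le
    exact mul_le_mul_of_nonneg_left this hlam_pos.le
  -- Jensen step
  have hFmeas : Measurable fun p : Ω × Ω => Real.cosh ‖S p.1 - S p.2‖ :=
    Real.continuous_cosh.measurable.comp
      (((hSmeas.comp measurable_fst).sub (hSmeas.comp measurable_snd)).norm)
  have hFint : Integrable (fun p : Ω × Ω => Real.cosh ‖S p.1 - S p.2‖) (μ.prod μ) := by
    refine (integrable_const (Real.cosh (2 * (n * (lam * M))))).mono'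
      hFmeas.aestronglyMeasurable ?_
    have hmset : MeasurableSet {ω : Ω | ‖S ω‖ ≤ n * (lam * M)} :=
      measurableSet_le hSmeas.norm measurable_const
    filter_upwards [ae_prod_mk hmset hmset hSbound hSbound] with p hp
    rw [Real.norm_eq_abs, abs_of_pos (Real.cosh_pos _)]
    apply Real.cosh_le_cosh.2
    rw [abs_of_nonneg (norm_nonneg _), abs_of_nonneg (by positivity)]
    exact (norm_sub_le _ _).trans (by linarith [hp.1, hp.2])
  have hJensen : ∀ ω, Y ω ≤ ∫ ω', Real.cosh ‖S ω - S ω'‖ ∂μ := by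
    intro ω
    have hconv := convexOn_cosh_norm_sub (S ω)
    have hgc : ContinuousOn (fun v : H => Real.cosh ‖S ω - v‖) Set.univ :=
      (Real.continuous_cosh.comp (continuous_const.sub continuous_id).norm).continuousOn
    have hgi : Integrable (fun ω' => Real.cosh ‖S ω - S ω'‖) μ := by
      refine (integrable_const (Real.cosh (‖S ω‖ + n * (lam * M)))).mono'
        (Real.continuous_cosh.measurable.comp
          ((measurable_const.sub hSmeas).norm)).aestronglyMeasurable ?_
      filter_upwards [hSbound] with ω' h
      rw [Real.norm_eq_abs, abs_of_pos (Real.cosh_pos _)]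
      apply Real.cosh_le_cosh.2
      rw [abs_of_nonneg (norm_nonneg _), abs_of_nonneg (by positivity)]
      exact (norm_sub_le _ _).trans (by linarith)
    have := hconv.map_integral_le hgc isClosed_univ
      (Filter.Eventually.of_forall fun ω' => Set.mem_univ (S ω')) hSint hgi
    simpa [hYdef, hcdef] using this
  have hRHSint : Integrable (fun ω => ∫ ω', Real.cosh ‖S ω - S ω'‖ ∂μ) μ :=
    hFint.integral_prod_left
  have hEY : ∫ ω, Y ω ∂μ ≤ Real.cosh (2 * (lam * M)) ^ n := by
    calc ∫ ω, Y ω ∂μ ≤ ∫ ω, (∫ ω', Real.cosh ‖S ω - S ω'‖ ∂μ) ∂μ :=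
          integral_mono hYint hRHSint hJensen
      _ = ∫ p, Real.cosh ‖S p.1 - S p.2‖ ∂(μ.prod μ) := integral_integral hFint
      _ = ∫ p, Real.cosh ‖∑ i, (X i p.1 - X i p.2)‖ ∂(μ.prod μ) := by
          congr 1; funext p; rw [hSdef]; simp only; rw [Finset.sum_sub_distrib]
      _ ≤ Real.cosh (2 * (lam * M)) ^ (Finset.univ : Finset (Fin n)).card :=
          core_induction μ X hXmeas hXindep hXbound Finset.univ
      _ = Real.cosh (2 * (lam * M)) ^ n := by rw [Finset.card_univ, Fintype.card_fin]
  -- Markov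
  have hYpos : 0 ≤ᵐ[μ] Y := Filter.Eventually.of_forall fun ω => (Real.cosh_pos _).le
  have hmarkov := mul_meas_ge_le_integral_of_nonneg hYpos hYint (Real.cosh (lam * (n * ε)))
  have hcoshpos : (0:ℝ) < Real.cosh (lam * (n * ε)) := Real.cosh_pos _
  -- numeric bound
  have hnum : Real.cosh (2 * (lam * M)) ^ n / Real.cosh (lam * (n * ε))
      ≤ 2 * Real.exp (-(n : ℝ) * ε ^ 2 / (8 * M ^ 2)) := by
    have h1 : Real.cosh (2 * (lam * M)) ^ n ≤ Real.exp ((n:ℝ) * (2 * lam ^ 2 * M ^ 2)) := by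
      calc Real.cosh (2 * (lam * M)) ^ n ≤ Real.exp ((2 * (lam * M)) ^ 2 / 2) ^ n := by
            apply pow_le_pow_left₀ (Real.cosh_pos _).le (Real.cosh_le_exp_half_sq _)
        _ = Real.exp ((n:ℝ) * (2 * lam ^ 2 * M ^ 2)) := by
            rw [← Real.exp_nat_mul]; congr 1; ring
    have h2 : Real.exp (lam * (n * ε)) / 2 ≤ Real.cosh (lam * (n * ε)) :=
      half_exp_le_cosh _
    have h3 : Real.cosh (2 * (lam * M)) ^ n / Real.cosh (lam * (n * ε))
        ≤ Real.exp ((n:ℝ) * (2 * lam ^ 2 * M ^ 2)) / (Real.exp (lam * (n * ε)) / 2) :=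
      div_le_div₀ (Real.exp_pos _).le h1 (by positivity) h2
    refine h3.trans ?_
    have hexp : Real.exp ((n:ℝ) * (2 * lam ^ 2 * M ^ 2)) / (Real.exp (lam * (n * ε)) / 2)
        = 2 * Real.exp ((n:ℝ) * (2 * lam ^ 2 * M ^ 2) - lam * (n * ε)) := by
      rw [Real.exp_sub]; ring
    rw [hexp]
    have harg : (n:ℝ) * (2 * lam ^ 2 * M ^ 2) - lam * (n * ε)
        = -(n : ℝ) * ε ^ 2 / (8 * M ^ 2) := by
      rw [hlam]; field_simp; ring
    rw [harg]
  -- final assembly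
  calc μ {ω | ε ≤ ‖(n : ℝ)⁻¹ • ∑ i, ξ i ω - m0‖}
      ≤ μ {ω | Real.cosh (lam * (n * ε)) ≤ Y ω} := measure_mono hsubset
    _ = ENNReal.ofReal ((μ {ω | Real.cosh (lam * (n * ε)) ≤ Y ω}).toReal) :=
        (ENNReal.ofReal_toReal (measure_ne_top _ _)).symm
    _ ≤ ENNReal.ofReal (2 * Real.exp (-(n : ℝ) * ε ^ 2 / (8 * M ^ 2))) := by
        apply ENNReal.ofReal_le_ofReal
        have htr : (μ {ω | Real.cosh (lam * (n * ε)) ≤ Y ω}).toReal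
            ≤ (∫ ω, Y ω ∂μ) / Real.cosh (lam * (n * ε)) := by
          rw [le_div_iff₀ hcoshpos, mul_comm]
          exact hmarkov
        refine htr.trans (le_trans ?_ hnum)
        gcongr
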